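/- The sequence p_{n,d} defined for n ≥ j ≥ 2 and 1 ≤ d ≤ n-j+1 by the recurrence p_{n,d} = ((d-1)/(2n-3)) p_{n-1,d-1} + ((2n-3-d)/(2n-3)) p_{n-1,d}, with boundary values p_{n,1} = Γ(n-1)Γ(j-1/2)/(Γ(n-1/2)Γ(j-1)) and p_{n,n-j+1} = Γ(n-j+1)Γ(j-1/2)/(2^{n-j}Γ(n-1/2)), is given by p_{n,d} = [Γ(d)Γ(j-1/2)/Γ(n-1/2)] · Σ_{i=0}^{d-1} (-1)^i Γ(n - 1 - i/2) / (Γ(i+1)Γ(d-i)Γ(j - 1 - i/2)). -/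

import Mathlib

open Finset Polynomial


lemma gamma_factored (x : ℝ) (hx : ∀ t : ℕ, x ≠ -t) (m : ℕ) :
    Real.Gamma (x + m) = (∏ k ∈ range m, (x + k)) * Real.Gamma x := by
  induction m with
  | zero => simp
  | succ m ih =>
    have hxm : x + m ≠ 0 := by
      intro h
      exact hx m (by linarith)
    have : x + (m + 1 : ℕ) = (x + m) + 1 := by push_cast; ring
    rw [this, Real.Gamma_add_one hxm, ih, prod_range_succ]
    ring

lemma gamma_ratio (x : ℝ) (m : ℕ) (h : 0 < x + m) :
    Real.Gamma (x + m) / Real.Gamma x = ∏ k ∈ range m, (x + k) := by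
  by_cases hx : ∀ t : ℕ, x ≠ -t
  · rw [gamma_factored x hx m, mul_div_assoc,
      div_self (Real.Gamma_ne_zero hx), mul_one]
  · push_neg at hx
    obtain ⟨t, ht⟩ := hx
    have hG : Real.Gamma x = 0 := by
      rw [ht]; exact Real.Gamma_neg_nat_eq_zero t
    have htm : t ∈ range m := by
      rw [mem_range]
      by_contra hc
      push_neg at hc
      have : (m : ℝ) ≤ t := by exact_mod_cast hc
      rw [ht] at h; linarith
    rw [hG, div_zero, eq_comm]
    exact prod_eq_zero htm (by rw [ht]; ring)

lemma taylor_sub_coeff (p : ℝ[X]) (m : ℕ) (hp : p.natDegree ≤ m + 1) :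
    (taylor 1 p - p).coeff m = (m + 1 : ℝ) * p.coeff (m + 1) := by
  rw [coeff_sub, taylor_coeff]
  have hdeg : (hasseDeriv m p).natDegree < 2 := by
    have := Polynomial.natDegree_hasseDeriv_le p m
    omega
  rw [Polynomial.eval_eq_sum_range' hdeg]
  simp only [Polynomial.hasseDeriv_coeff]
  rw [Finset.sum_range_succ, Finset.sum_range_one]
  rw [Nat.zero_add, Nat.choose_self]
  rw [show 1 + m = m + 1 by omega, Nat.choose_succ_self_right]
  push_cast
  ring

lemma taylor_sub_natDegree (p : ℝ[X]) (m : ℕ) (hp : p.natDegree ≤ m + 1) :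
    (taylor 1 p - p).natDegree ≤ m := by
  rw [Polynomial.natDegree_le_iff_coeff_eq_zero]
  intro k hk
  rcases Nat.lt_or_ge (m+1) k with h | h
  · apply Polynomial.coeff_eq_zero_of_natDegree_lt
    calc (taylor 1 p - p).natDegree ≤ max (taylor 1 p).natDegree p.natDegree :=
        Polynomial.natDegree_sub_le _ _
      _ ≤ m + 1 := by rw [Polynomial.natDegree_taylor]; omega
      _ < k := h
  · have hk' : k = m + 1 := by omega
    subst hk'
    rw [coeff_sub, taylor_coeff]
    have hdeg : (hasseDeriv (m+1) p).natDegree < 1 := by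
      have := Polynomial.natDegree_hasseDeriv_le p (m+1)
      omega
    rw [Polynomial.eval_eq_sum_range' hdeg]
    simp [Polynomial.hasseDeriv_coeff]


lemma fwdDiff_poly_eval (p : ℝ[X]) :
    fwdDiff (1:ℝ) (fun x : ℝ => p.eval x) = fun x : ℝ => (taylor 1 p - p).eval x := by
  funext x
  simp [fwdDiff, taylor_eval]

lemma fwdDiff_iter_poly (m : ℕ) : ∀ p : ℝ[X], p.natDegree ≤ m → ∀ x : ℝ,
    (fwdDiff (1:ℝ))^[m] (fun y : ℝ => p.eval y) x = (m.factorial : ℝ) * p.coeff m := by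
  induction m with
  | zero =>
    intro p hp x
    rw [Polynomial.eq_C_of_natDegree_le_zero hp]
    simp
  | succ m ih =>
    intro p hp x
    rw [Function.iterate_succ_apply, fwdDiff_poly_eval]
    rw [ih _ (taylor_sub_natDegree p m hp) x, taylor_sub_coeff p m hp]
    push_cast [Nat.factorial_succ]
    ring

lemma altsum_poly (m : ℕ) (p : ℝ[X]) (hp : p.natDegree ≤ m) :
    ∑ i ∈ range (m + 1), (-1 : ℝ) ^ i * (m.choose i) * p.eval (i : ℝ)
      = (-1) ^ m * (m.factorial : ℝ) * p.coeff m := by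
  have h := fwdDiff_iter_eq_sum_shift (1:ℝ) (fun y : ℝ => p.eval y) m 0
  rw [fwdDiff_iter_poly m p hp 0] at h
  calc ∑ i ∈ range (m + 1), (-1 : ℝ) ^ i * (m.choose i) * p.eval (i : ℝ)
      = (-1:ℝ)^m * ∑ k ∈ range (m+1),
          ((-1:ℤ)^(m-k) * (m.choose k) : ℤ) • p.eval ((0:ℝ) + k • (1:ℝ)) := by
        rw [mul_sum]
        apply sum_congr rfl
        intro k hk
        rw [mem_range] at hk
        have hkm : k ≤ m := by omega
        have hxx : ((0:ℝ) + k • (1:ℝ)) = (k:ℝ) := by simp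
        rw [hxx, zsmul_eq_mul]
        push_cast
        have hsign : (-1:ℝ)^m * (-1:ℝ)^(m-k) = (-1:ℝ)^k := by
          rw [← pow_add, show m + (m - k) = (m-k)*2 + k by omega, pow_add, pow_mul',
            neg_one_sq, one_pow, one_mul]
        linear_combination (-(m.choose k : ℝ) * p.eval (k:ℝ)) * hsign
    _ = (-1) ^ m * (m.factorial : ℝ) * p.coeff m := by rw [← h]; ring


noncomputable def cf (j n d : ℕ) : ℝ :=
  Real.Gamma (d:ℝ) * Real.Gamma ((j:ℝ) - 1/2) / Real.Gamma ((n:ℝ) - 1/2) *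
    ∑ i ∈ range d, (-1:ℝ)^i * Real.Gamma ((n:ℝ) - 1 - (i:ℝ)/2) /
      (Real.Gamma ((i:ℝ) + 1) * Real.Gamma ((d:ℝ) - (i:ℝ)) * Real.Gamma ((j:ℝ) - 1 - (i:ℝ)/2))

lemma cf_step (j n d : ℕ) (hj : 2 ≤ j) (hn : j ≤ n) (hd : 2 ≤ d) (hdn : d ≤ n + 1 - j) :
    cf j (n+1) d = ((d:ℝ) - 1) / (2*(n:ℝ) - 1) * cf j n (d-1)
      + (2*(n:ℝ) - 1 - (d:ℝ)) / (2*(n:ℝ) - 1) * cf j n d := by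
  have hd1 : (1:ℕ) ≤ d := by omega
  have hn2 : 2 ≤ n := by omega
  unfold cf
  push_cast [Nat.cast_sub hd1]
  -- extend the (d-1)-sum to a d-sum
  have hzero : (-1:ℝ)^(d-1) * Real.Gamma ((n:ℝ) - 1 - ((d-1:ℕ):ℝ)/2) /
      (Real.Gamma (((d-1:ℕ):ℝ) + 1) * Real.Gamma (((d:ℝ) - 1) - ((d-1:ℕ):ℝ)) *
        Real.Gamma ((j:ℝ) - 1 - ((d-1:ℕ):ℝ)/2)) = 0 := by
    have : ((d:ℝ) - 1) - ((d-1:ℕ):ℝ) = 0 := by push_cast [Nat.cast_sub hd1]; ring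
    rw [this, Real.Gamma_zero]
    simp
  have hsum' := Finset.sum_range_succ (fun i : ℕ => (-1:ℝ)^i * Real.Gamma ((n:ℝ) - 1 - (i:ℝ)/2) /
      (Real.Gamma ((i:ℝ) + 1) * Real.Gamma ((d:ℝ) - 1 - (i:ℝ)) *
        Real.Gamma ((j:ℝ) - 1 - (i:ℝ)/2))) (d-1)
  rw [show d - 1 + 1 = d from by omega, hzero, add_zero] at hsum'
  rw [← hsum']
  simp only [Finset.mul_sum]
  rw [← Finset.sum_add_distrib]
  apply Finset.sum_congr rfl
  intro i hi
  rw [mem_range] at hi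
  -- basic bounds
  have hinj : (i:ℝ) ≤ (n:ℝ) - (j:ℝ) := by
    have : i ≤ n - j := by omega
    have h2 : (i:ℝ) ≤ ((n-j:ℕ):ℝ) := by exact_mod_cast this
    rwa [Nat.cast_sub hn] at h2
  have hjR : (2:ℝ) ≤ (j:ℝ) := by exact_mod_cast hj
  have hnR : (2:ℝ) ≤ (n:ℝ) := by exact_mod_cast hn2
  have hgx_pos : 0 < Real.Gamma ((n:ℝ) - 1 - (i:ℝ)/2) :=
    Real.Gamma_pos_of_pos (by linarith)
  have hgn_pos : 0 < Real.Gamma ((n:ℝ) - 1/2) := Real.Gamma_pos_of_pos (by linarith)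
  have hgi_pos : 0 < Real.Gamma ((i:ℝ) + 1) :=
    Real.Gamma_pos_of_pos (by positivity)
  have h2n : (2*(n:ℝ) - 1) ≠ 0 := by linarith
  have hnhalf : ((n:ℝ) - 1/2) ≠ 0 := by linarith
  have hdR : (2:ℝ) ≤ (d:ℝ) := by exact_mod_cast hd
  have hd1n : ((d:ℝ) - 1) ≠ 0 := by linarith
  -- Gamma recurrences
  have hG1 : Real.Gamma ((n:ℝ) + 1 - 1/2) = ((n:ℝ) - 1/2) * Real.Gamma ((n:ℝ) - 1/2) := by
    rw [show (n:ℝ) + 1 - 1/2 = ((n:ℝ) - 1/2) + 1 by ring, Real.Gamma_add_one hnhalf]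
  have hG2 : Real.Gamma ((n:ℝ) + 1 - 1 - (i:ℝ)/2)
      = ((n:ℝ) - 1 - (i:ℝ)/2) * Real.Gamma ((n:ℝ) - 1 - (i:ℝ)/2) := by
    rw [show (n:ℝ) + 1 - 1 - (i:ℝ)/2 = ((n:ℝ) - 1 - (i:ℝ)/2) + 1 by ring,
      Real.Gamma_add_one (by linarith)]
  have hG3 : Real.Gamma (d:ℝ) = ((d:ℝ) - 1) * Real.Gamma ((d:ℝ) - 1) := by
    have h := Real.Gamma_add_one hd1n
    rw [sub_add_cancel] at h
    exact h
  rw [hG1, hG2, hG3]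
  by_cases hgj : Real.Gamma ((j:ℝ) - 1 - (i:ℝ)/2) = 0
  · rw [hgj]
    simp only [mul_zero, zero_mul, div_zero, add_zero, zero_add]
  rcases Nat.lt_or_ge i (d-1) with hid | hid
  · -- interior term
    have hiR : (i:ℝ) ≤ (d:ℝ) - 2 := by
      have : i ≤ d - 2 := by omega
      have h2 : (i:ℝ) ≤ ((d-2:ℕ):ℝ) := by exact_mod_cast this
      rwa [Nat.cast_sub hd, Nat.cast_ofNat] at h2
    have hdin : ((d:ℝ) - 1 - (i:ℝ)) ≠ 0 := by linarith
    have hgdi_pos : 0 < Real.Gamma (((d:ℝ) - 1) - (i:ℝ)) :=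
      Real.Gamma_pos_of_pos (by linarith)
    have hG4 : Real.Gamma ((d:ℝ) - (i:ℝ))
        = ((d:ℝ) - 1 - (i:ℝ)) * Real.Gamma (((d:ℝ) - 1) - (i:ℝ)) := by
      rw [show (d:ℝ) - (i:ℝ) = ((d:ℝ) - 1 - (i:ℝ)) + 1 by ring,
        Real.Gamma_add_one hdin]
    rw [hG4]
    have hsL : ((d:ℝ) - 1) * ((n:ℝ) - 1 - (i:ℝ)/2) / (((n:ℝ) - 1/2) * ((d:ℝ) - 1 - (i:ℝ)))
        = ((d:ℝ) - 1) / (2*(n:ℝ) - 1)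
          + (2*(n:ℝ) - 1 - (d:ℝ)) * ((d:ℝ) - 1) / ((2*(n:ℝ) - 1) * ((d:ℝ) - 1 - (i:ℝ))) := by
      rw [show ((d:ℝ) - 1) / (2*(n:ℝ) - 1)
          = (((d:ℝ) - 1) * ((d:ℝ) - 1 - (i:ℝ))) / ((2*(n:ℝ) - 1) * ((d:ℝ) - 1 - (i:ℝ)))
          from (mul_div_mul_right _ _ hdin).symm]
      rw [← add_div]
      rw [div_eq_div_iff (mul_ne_zero hnhalf hdin) (mul_ne_zero h2n hdin)]
      ring
    set e : ℝ := (d:ℝ) - 1 - (i:ℝ) with he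
    set b : ℝ := (n:ℝ) - 1 - (i:ℝ)/2 with hb
    set a : ℝ := (n:ℝ) - 1/2 with ha
    set w : ℝ := 2*(n:ℝ) - 1 with hw
    clear_value e b a w
    set K : ℝ := Real.Gamma ((d:ℝ) - 1) * Real.Gamma ((j:ℝ) - 1/2) * (-1)^i *
        Real.Gamma b /
        (Real.Gamma a * Real.Gamma ((i:ℝ) + 1) *
          Real.Gamma e * Real.Gamma ((j:ℝ) - 1 - (i:ℝ)/2)) with hK
    calc ((d:ℝ) - 1) * Real.Gamma ((d:ℝ) - 1) * Real.Gamma ((j:ℝ) - 1/2) /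
          ((a) * Real.Gamma (a)) *
          ((-1)^i * ((b) * Real.Gamma (b)) /
            (Real.Gamma ((i:ℝ) + 1) * ((e) * Real.Gamma (e)) *
              Real.Gamma ((j:ℝ) - 1 - (i:ℝ)/2)))
        = (((d:ℝ) - 1) * (b) / ((a) * (e))) * K := by
          rw [hK]; ring
      _ = (((d:ℝ) - 1) / (w)
          + (w - (d:ℝ)) * ((d:ℝ) - 1) / ((w) * (e))) * K := by
          rw [hsL]
      _ = ((d:ℝ) - 1) / (w) *
            (Real.Gamma ((d:ℝ) - 1) * Real.Gamma ((j:ℝ) - 1/2) / Real.Gamma (a) *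
              ((-1)^i * Real.Gamma (b) /
                (Real.Gamma ((i:ℝ) + 1) * Real.Gamma (e) *
                  Real.Gamma ((j:ℝ) - 1 - (i:ℝ)/2))))
          + (w - (d:ℝ)) / (w) *
            (((d:ℝ) - 1) * Real.Gamma ((d:ℝ) - 1) * Real.Gamma ((j:ℝ) - 1/2) /
              Real.Gamma (a) *
              ((-1)^i * Real.Gamma (b) /
                (Real.Gamma ((i:ℝ) + 1) *
                  ((e) * Real.Gamma (e)) *
                  Real.Gamma ((j:ℝ) - 1 - (i:ℝ)/2)))) := by
          rw [hK]; ring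
  · -- boundary term i = d-1
    have hied : i = d - 1 := by omega
    have hiR : (i:ℝ) = (d:ℝ) - 1 := by
      rw [hied, Nat.cast_sub hd1]; push_cast; ring
    have hzero2 : Real.Gamma (((d:ℝ) - 1) - (i:ℝ)) = 0 := by
      rw [hiR, show ((d:ℝ)-1) - ((d:ℝ)-1) = 0 by ring, Real.Gamma_zero]
    have hG5 : Real.Gamma ((d:ℝ) - (i:ℝ)) = 1 := by
      rw [hiR, show (d:ℝ) - ((d:ℝ)-1) = 1 by ring, Real.Gamma_one]
    rw [hzero2, hG5, hiR]
    simp only [mul_zero, zero_mul, div_zero]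
    rw [zero_add]
    set a : ℝ := (n:ℝ) - 1/2 with ha
    set w : ℝ := 2*(n:ℝ) - 1 with hw
    have hsL : ((d:ℝ) - 1) * ((n:ℝ) - 1 - ((d:ℝ) - 1)/2) / (a)
        = (w - (d:ℝ)) / (w) * ((d:ℝ) - 1) := by
      rw [div_mul_eq_mul_div]
      rw [div_eq_div_iff hnhalf h2n]
      ring
    clear_value a w
    calc ((d:ℝ) - 1) * Real.Gamma ((d:ℝ) - 1) * Real.Gamma ((j:ℝ) - 1/2) /
          ((a) * Real.Gamma (a)) *
          ((-1)^i * (((n:ℝ) - 1 - ((d:ℝ) - 1)/2) * Real.Gamma ((n:ℝ) - 1 - ((d:ℝ) - 1)/2)) /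
            (Real.Gamma (((d:ℝ) - 1) + 1) * 1 * Real.Gamma ((j:ℝ) - 1 - ((d:ℝ) - 1)/2)))
        = (((d:ℝ) - 1) * ((n:ℝ) - 1 - ((d:ℝ) - 1)/2) / (a)) *
          (Real.Gamma ((d:ℝ) - 1) * Real.Gamma ((j:ℝ) - 1/2) /
            Real.Gamma (a) *
            ((-1)^i * Real.Gamma ((n:ℝ) - 1 - ((d:ℝ) - 1)/2) /
              (Real.Gamma (((d:ℝ) - 1) + 1) * 1 * Real.Gamma ((j:ℝ) - 1 - ((d:ℝ) - 1)/2)))) := by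
          ring
      _ = (w - (d:ℝ)) / (w) *
          (((d:ℝ) - 1) * Real.Gamma ((d:ℝ) - 1) * Real.Gamma ((j:ℝ) - 1/2) /
            Real.Gamma (a) *
            ((-1)^i * Real.Gamma ((n:ℝ) - 1 - ((d:ℝ) - 1)/2) /
              (Real.Gamma (((d:ℝ) - 1) + 1) * 1 * Real.Gamma ((j:ℝ) - 1 - ((d:ℝ) - 1)/2)))) := by
          rw [hsL]; ring


lemma closed_base2 (j n : ℕ) (hj : 2 ≤ j) (hn : j ≤ n) :
    Real.Gamma (((n - j + 1 : ℕ) : ℝ)) * Real.Gamma ((j:ℝ) - 1/2) / Real.Gamma ((n:ℝ) - 1/2) *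
      ∑ i ∈ range (n - j + 1), (-1:ℝ)^i * Real.Gamma ((n:ℝ) - 1 - (i:ℝ)/2) /
        (Real.Gamma ((i:ℝ) + 1) * Real.Gamma (((n - j + 1 : ℕ):ℝ) - (i:ℝ)) *
          Real.Gamma ((j:ℝ) - 1 - (i:ℝ)/2))
      = Real.Gamma ((n:ℝ) - (j:ℝ) + 1) * Real.Gamma ((j:ℝ) - 1/2) /
        (2 ^ (n - j) * Real.Gamma ((n:ℝ) - 1/2)) := by
  set m := n - j with hm
  have hnm : (n:ℝ) = (j:ℝ) + m := by
    have : n = j + m := by omega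
    exact_mod_cast congrArg (Nat.cast : ℕ → ℝ) this
  set p : ℝ[X] := ∏ k ∈ range m, (C (-(1:ℝ)/2) * X + C ((j:ℝ) - 1 + k)) with hp
  have hfne : ∀ k ∈ range m, (C (-(1:ℝ)/2) * X + C ((j:ℝ) - 1 + k)) ≠ 0 := by
    intro k _
    intro hzero
    have h2 : (C (-(1:ℝ)/2) * X + C ((j:ℝ) - 1 + k)).leadingCoeff = -(1:ℝ)/2 :=
      leadingCoeff_linear (by norm_num)
    rw [hzero, leadingCoeff_zero] at h2
    norm_num at h2
  have hdeg : p.natDegree = m := by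
    rw [hp, natDegree_prod _ _ hfne]
    rw [Finset.sum_congr rfl (fun k _ => natDegree_linear (by norm_num : -(1:ℝ)/2 ≠ 0))]
    simp [Finset.sum_const, mul_one]
  have hlead0 : p.leadingCoeff = (-(1:ℝ)/2) ^ m := by
    rw [hp, leadingCoeff_prod]
    rw [Finset.prod_congr rfl (fun k _ => leadingCoeff_linear (by norm_num : -(1:ℝ)/2 ≠ 0))]
    simp
    rw [div_pow]
  have hlead : p.coeff m = (-(1:ℝ)/2) ^ m := by
    conv_lhs => rw [show m = p.natDegree from hdeg.symm]
    rw [Polynomial.coeff_natDegree]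
    exact hlead0
  have hev : ∀ i : ℕ, p.eval (i:ℝ) = ∏ k ∈ range m, ((j:ℝ) - 1 - (i:ℝ)/2 + k) := by
    intro i
    rw [hp, eval_prod]
    exact Finset.prod_congr rfl (fun k _ => by simp; ring
      )
  have hkey : ∑ i ∈ range (m + 1), (-1 : ℝ) ^ i * (m.choose i) * p.eval (i : ℝ)
      = (m.factorial : ℝ) / 2 ^ m := by
    rw [altsum_poly m p (le_of_eq hdeg), hlead]
    rw [show ((-1:ℝ))^m * (m.factorial:ℝ) * (-(1:ℝ)/2)^m
        = (m.factorial:ℝ) * (((-1:ℝ)) * (-(1:ℝ)/2))^m by rw [mul_pow]; ring]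
    norm_num
    simp [div_eq_mul_inv, inv_pow]
  have hterm : ∀ i ∈ range (m+1),
      (-1:ℝ)^i * Real.Gamma ((n:ℝ) - 1 - (i:ℝ)/2) /
        (Real.Gamma ((i:ℝ) + 1) * Real.Gamma (((m + 1 : ℕ):ℝ) - (i:ℝ)) *
          Real.Gamma ((j:ℝ) - 1 - (i:ℝ)/2))
      = (-1:ℝ)^i * p.eval (i:ℝ) / ((i.factorial : ℝ) * ((m-i).factorial : ℝ)) := by
    intro i hi
    rw [mem_range] at hi
    have him : i ≤ m := by omega
    have hgam1 : Real.Gamma ((i:ℝ) + 1) = (i.factorial : ℝ) := Real.Gamma_nat_eq_factorial i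
    have hcast : ((m + 1 : ℕ):ℝ) - (i:ℝ) = ((m - i : ℕ):ℝ) + 1 := by
      push_cast [him]; ring
    have hgam2 : Real.Gamma (((m + 1 : ℕ):ℝ) - (i:ℝ)) = ((m-i).factorial : ℝ) := by
      rw [hcast]; exact Real.Gamma_nat_eq_factorial (m-i)
    have hpos : 0 < ((j:ℝ) - 1 - (i:ℝ)/2) + m := by
      have h1 : (i:ℝ) ≤ (m:ℝ) := by exact_mod_cast him
      have h2 : (2:ℝ) ≤ (j:ℝ) := by exact_mod_cast hj
      linarith
    have hratio : Real.Gamma ((n:ℝ) - 1 - (i:ℝ)/2) / Real.Gamma ((j:ℝ) - 1 - (i:ℝ)/2)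
        = p.eval (i:ℝ) := by
      rw [hev i, ← gamma_ratio _ m hpos]
      congr 1
      rw [hnm]; ring
    rw [hgam1, hgam2]
    rw [show (i.factorial : ℝ) * ((m-i).factorial : ℝ) * Real.Gamma ((j:ℝ) - 1 - (i:ℝ)/2)
        = Real.Gamma ((j:ℝ) - 1 - (i:ℝ)/2) * ((i.factorial : ℝ) * ((m-i).factorial : ℝ)) by ring]
    rw [← div_div, mul_div_assoc, hratio, mul_div_assoc]
  rw [show n - j + 1 = m + 1 from rfl]
  rw [Finset.sum_congr rfl hterm]
  have hgmp : Real.Gamma (((m + 1 : ℕ)):ℝ) = (m.factorial : ℝ) := by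
    push_cast
    exact Real.Gamma_nat_eq_factorial m
  have hgmp2 : Real.Gamma ((n:ℝ) - (j:ℝ) + 1) = (m.factorial : ℝ) := by
    rw [show (n:ℝ) - (j:ℝ) + 1 = (m:ℝ) + 1 by rw [hnm]; ring]
    exact Real.Gamma_nat_eq_factorial m
  rw [hgmp, hgmp2]
  have hsum2 : (m.factorial : ℝ) * ∑ i ∈ range (m+1),
      (-1:ℝ)^i * p.eval (i:ℝ) / ((i.factorial : ℝ) * ((m-i).factorial : ℝ))
      = (m.factorial : ℝ) / 2 ^ m := by
    rw [Finset.mul_sum, ← hkey]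
    apply Finset.sum_congr rfl
    intro i hi
    rw [mem_range] at hi
    have him : i ≤ m := by omega
    have hfac : ((m.choose i : ℕ):ℝ) * (i.factorial : ℝ) * ((m-i).factorial : ℝ)
        = (m.factorial : ℝ) := by
      exact_mod_cast congrArg (Nat.cast : ℕ → ℝ)
        (Nat.choose_mul_factorial_mul_factorial him)
    have hne1 : (i.factorial : ℝ) ≠ 0 := by exact_mod_cast i.factorial_ne_zero
    have hne2 : ((m-i).factorial : ℝ) ≠ 0 := by exact_mod_cast (m-i).factorial_ne_zero
    field_simp
    linear_combination (-p.eval (i:ℝ)) * hfac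
  calc (m.factorial:ℝ) * Real.Gamma ((j:ℝ) - 1/2) / Real.Gamma ((n:ℝ) - 1/2) *
        ∑ i ∈ range (m+1), (-1:ℝ)^i * p.eval (i:ℝ) / ((i.factorial:ℝ) * ((m-i).factorial:ℝ))
      = Real.Gamma ((j:ℝ) - 1/2) / Real.Gamma ((n:ℝ) - 1/2) *
        ((m.factorial:ℝ) * ∑ i ∈ range (m+1),
          (-1:ℝ)^i * p.eval (i:ℝ) / ((i.factorial:ℝ) * ((m-i).factorial:ℝ))) := by ring
    _ = Real.Gamma ((j:ℝ) - 1/2) / Real.Gamma ((n:ℝ) - 1/2) * ((m.factorial:ℝ) / 2^m) := by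
        rw [hsum2]
    _ = (m.factorial:ℝ) * Real.Gamma ((j:ℝ) - 1/2) / (2^m * Real.Gamma ((n:ℝ) - 1/2)) := by
        ring

open Finset in
/-- Closed-form solution of the two-dimensional recurrence
`p_{n,d} = ((d-1)/(2n-3)) p_{n-1,d-1} + ((2n-3-d)/(2n-3)) p_{n-1,d}` (for interior
values `2 ≤ d ≤ n-j`), with boundary values
`p_{n,1} = Γ(n-1)Γ(j-1/2)/(Γ(n-1/2)Γ(j-1))` and
`p_{n,n-j+1} = Γ(n-j+1)Γ(j-1/2)/(2^(n-j)Γ(n-1/2))`, for fixed `j ≥ 2`: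
`p_{n,d} = [Γ(d)Γ(j-1/2)/Γ(n-1/2)] Σ_{i=0}^{d-1} (-1)^i Γ(n-1-i/2)/(Γ(i+1)Γ(d-i)Γ(j-1-i/2))`. -/
theorem port_recurrence_closed_form (j : ℕ) (hj : 2 ≤ j) (p : ℕ → ℕ → ℝ)
    (hrec : ∀ n d : ℕ, j < n → 2 ≤ d → d ≤ n - j →
      p n d = ((d : ℝ) - 1) / (2 * (n : ℝ) - 3) * p (n - 1) (d - 1) +
        (2 * (n : ℝ) - 3 - (d : ℝ)) / (2 * (n : ℝ) - 3) * p (n - 1) d)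
    (hbase1 : ∀ n : ℕ, j ≤ n →
      p n 1 = Real.Gamma ((n : ℝ) - 1) * Real.Gamma ((j : ℝ) - 1 / 2) /
        (Real.Gamma ((n : ℝ) - 1 / 2) * Real.Gamma ((j : ℝ) - 1)))
    (hbase2 : ∀ n : ℕ, j ≤ n →
      p n (n - j + 1) = Real.Gamma ((n : ℝ) - (j : ℝ) + 1) * Real.Gamma ((j : ℝ) - 1 / 2) /
        (2 ^ (n - j) * Real.Gamma ((n : ℝ) - 1 / 2))) :
    ∀ n d : ℕ, j ≤ n → 1 ≤ d → d ≤ n - j + 1 →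
      p n d = Real.Gamma (d : ℝ) * Real.Gamma ((j : ℝ) - 1 / 2) / Real.Gamma ((n : ℝ) - 1 / 2) *
        ∑ i ∈ range d, (-1 : ℝ) ^ i * Real.Gamma ((n : ℝ) - 1 - (i : ℝ) / 2) /
          (Real.Gamma ((i : ℝ) + 1) * Real.Gamma ((d : ℝ) - (i : ℝ)) *
            Real.Gamma ((j : ℝ) - 1 - (i : ℝ) / 2)) := by
  have main : ∀ n d : ℕ, j ≤ n → 1 ≤ d → d ≤ n - j + 1 → p n d = cf j n d := by
    intro n
    induction n using Nat.strong_induction_on with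
    | _ n IH =>
      intro d hn hd1 hd2
      by_cases hd_one : d = 1
      · subst hd_one
        rw [hbase1 n hn]
        unfold cf
        rw [Finset.sum_range_one]
        norm_num [Real.Gamma_one]
        ring
      by_cases hd_top : d = n - j + 1
      · rw [hd_top, hbase2 n hn]
        have := closed_base2 j n hj hn
        unfold cf
        rw [this]
      · -- interior
        have hjn : j < n := by omega
        have hd2' : 2 ≤ d := by omega
        have hdn : d ≤ n - j := by omega
        rw [hrec n d hjn hd2' hdn]
        rw [IH (n-1) (by omega) (d-1) (by omega) (by omega) (by omega)]
        rw [IH (n-1) (by omega) d (by omega) (by omega) (by omega)]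
        have hstep := cf_step j (n-1) d hj (by omega) hd2' (by omega)
        rw [show n - 1 + 1 = n by omega] at hstep
        rw [show ((n-1:ℕ):ℝ) = (n:ℝ) - 1 by
          push_cast [Nat.cast_sub (by omega : 1 ≤ n)]; ring] at hstep
        rw [show 2*((n:ℝ) - 1) - 1 = 2*(n:ℝ) - 3 by ring] at hstep
        exact hstep.symm
  intro n d h1 h2 h3
  rw [main n d h1 h2 h3]
  unfold cf
  rfl
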